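/- With the topology τ_c generated by the base of sets ↑α \ (↑α₁ ∪ ⋯ ∪ ↑α_k), the semigroup I_λ^n is a semitopological semigroup with continuous inversion: all translations x ↦ ax, x ↦ xa and the inversion map are continuous. -/

import Mathlib

open Set Topology

universe v

namespace ISemi

/-- The set of partial injective transformations (partial bijections) of `ι`
with rank (cardinality of the range, equivalently of the domain) at most `n`. -/
def Elem (ι : Type*) (n : ℕ) : Type _ :=
  {f : ι ≃. ι // {a : ι | (f a).isSome}.encard ≤ (n : ℕ∞)}

variable {ι : Type*} {n : ℕ}

/-- Composition of partial bijections (written multiplicatively). -/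
instance : Semigroup (Elem ι n) where
  mul f g := ⟨f.1.trans g.1, by
    refine le_trans (Set.encard_mono ?_) f.2
    intro a ha
    simp only [Set.mem_setOf_eq] at *
    rcases Option.isSome_iff_exists.1 ha with ⟨c, hc⟩
    rcases (PEquiv.trans_eq_some _ _ _ _).1 hc with ⟨b, hb, -⟩
    simp [hb]⟩
  mul_assoc f g h := Subtype.ext (PEquiv.trans_assoc f.1 g.1 h.1)

/-- The inverse partial bijection. -/
def inv (f : Elem ι n) : Elem ι n := ⟨f.1.symm, by
  have key : ∀ (g : ι ≃. ι), {b : ι | (g.symm b).isSome} ⊆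
      (fun p : {a : ι | (g a).isSome} => (g p.1).get p.2) '' Set.univ := by
    intro g b hb
    rcases Option.isSome_iff_exists.1 hb with ⟨a, ha⟩
    have ha' : b ∈ g a := (PEquiv.mem_iff_mem g).1 (Option.mem_def.2 ha)
    simp only [Option.mem_def] at ha'
    refine ⟨⟨a, ?_⟩, Set.mem_univ _, ?_⟩
    · simp [Set.mem_setOf_eq, ha']
    · simp [ha']
  calc {b : ι | (f.1.symm b).isSome}.encard
      ≤ ((fun p : {a : ι | (f.1 a).isSome} => (f.1 p.1).get p.2) '' Set.univ).encard :=
        Set.encard_mono (key f.1)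
    _ ≤ (Set.univ : Set {a : ι | (f.1 a).isSome}).encard := Set.encard_image_le _ _
    _ = {a : ι | (f.1 a).isSome}.encard := by rw [Set.encard_univ, ENat.card_coe_set_eq]
    _ ≤ (n : ℕ∞) := f.2⟩

/-- The zero (the empty partial map). -/
def zero (ι : Type*) (n : ℕ) : Elem ι n := ⟨⊥, by simp [PEquiv.bot_apply]⟩

/-- idempotents -/
def IsIdem (e : Elem ι n) : Prop := e * e = e

/-- The natural partial order on the inverse semigroup `Elem ι n`:
`f ≼ g` iff `f = e * g` for some idempotent `e`. -/
def nle (f g : Elem ι n) : Prop := ∃ e : Elem ι n, IsIdem e ∧ f = e * g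

/-- up-set of `f` w.r.t. the natural partial order -/
def upset (f : Elem ι n) : Set (Elem ι n) := {g | nle f g}

/-- the rank of a partial bijection: the cardinality of its domain (= range) -/
noncomputable def rank (f : Elem ι n) : ℕ∞ := {a : ι | (f.1 a).isSome}.encard

def dom (f : Elem ι n) : Set ι := {a : ι | (f.1 a).isSome}

def ran (f : Elem ι n) : Set ι := {b : ι | (f.1.symm b).isSome}

/-- A topology on `Elem ι n` is shift-continuous if all left and right
translations are continuous. -/
def ShiftContinuous (ι : Type*) (n : ℕ) [TopologicalSpace (Elem ι n)] : Prop :=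
  ∀ a : Elem ι n, Continuous (fun x : Elem ι n => a * x) ∧
    Continuous (fun x : Elem ι n => x * a)

/-- A space is feebly compact if every locally finite family of nonempty open
sets is finite. -/
def FeeblyCompact (X : Type*) [TopologicalSpace X] : Prop :=
  ∀ 𝒰 : Set (Set X), (∀ U ∈ 𝒰, IsOpen U ∧ U.Nonempty) →
    LocallyFinite (fun U : 𝒰 => (U : Set X)) → 𝒰.Finite

/-- A space is `d`-feebly compact if every discrete family of open sets is
finite; a family is discrete if every point has a neighbourhood meeting at
most one member of the family. -/
def DFeeblyCompact (X : Type*) [TopologicalSpace X] : Prop :=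
  ∀ 𝒰 : Set (Set X), (∀ U ∈ 𝒰, IsOpen U) →
    (∀ x : X, ∃ V ∈ 𝓝 x, {U ∈ 𝒰 | (U ∩ V).Nonempty}.Subsingleton) → 𝒰.Finite

/-- countably pracompact: there is a dense set `A` such that every infinite
subset of `A` has an accumulation point in `X`. -/
def CountablyPracompact (X : Type*) [TopologicalSpace X] : Prop :=
  ∃ A : Set X, Dense A ∧ ∀ B ⊆ A, B.Infinite → ∃ x : X, AccPt x (Filter.principal B)

/-- H-closed: closed in every Hausdorff space in which it embeds. -/
def HClosed (X : Type*) [TopologicalSpace X] : Prop :=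
  ∀ (Y : Type v) (_ : TopologicalSpace Y), T2Space Y →
    ∀ e : X → Y, IsEmbedding e → IsClosed (Set.range e)

/-- infra H-closed: every continuous image in a first-countable Hausdorff
space is closed. -/
def InfraHClosed (X : Type*) [TopologicalSpace X] : Prop :=
  ∀ (Y : Type v) (_ : TopologicalSpace Y), T2Space Y →
    FirstCountableTopology Y → ∀ f : X → Y, Continuous f → IsClosed (Set.range f)

/-- `Y`-compactness: every continuous image in `Y` is compact. -/
def YCompact (X : Type*) [TopologicalSpace X] (Y : Type*) [TopologicalSpace Y] : Prop :=
  ∀ f : X → Y, Continuous f → IsCompact (Set.range f)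

/-- scattered: every nonempty subset has a point isolated in it. -/
def Scattered (X : Type*) [TopologicalSpace X] : Prop :=
  ∀ S : Set X, S.Nonempty → ∃ x ∈ S, ∃ U : Set X, IsOpen U ∧ U ∩ S = {x}

/-- semiregular: there is a base consisting of regular open sets. -/
def Semiregular (X : Type*) [TopologicalSpace X] : Prop :=
  ∃ B : Set (Set X), TopologicalSpace.IsTopologicalBasis B ∧
    ∀ U ∈ B, interior (closure U) = U

/-- countably compact: every countable open cover has a finite subcover. -/
def CountablyCompact (X : Type*) [TopologicalSpace X] : Prop :=
  ∀ 𝒰 : Set (Set X), 𝒰.Countable → (∀ U ∈ 𝒰, IsOpen U) → ⋃₀ 𝒰 = Set.univ →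
    ∃ 𝒱 ⊆ 𝒰, 𝒱.Finite ∧ ⋃₀ 𝒱 = Set.univ

section Aux

-- ## auxiliary

lemma mul_val (f g : Elem ι n) : (f * g).1 = f.1.trans g.1 := rfl

lemma trans_apply' (f g : ι ≃. ι) (a : ι) : (f.trans g) a = (f a).bind g := rfl

/-- the partial identity on the domain of `f` -/
def pid (f : ι ≃. ι) : ι ≃. ι where
  toFun a := if (f a).isSome then some a else none
  invFun a := if (f a).isSome then some a else none
  inv a b := by
    constructor <;> intro h <;> by_contra hc <;>
      [skip; skip] <;>
      split_ifs at h with h1 <;> simp_all <;> subst h <;> simp_all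

lemma pid_apply (f : ι ≃. ι) (a : ι) :
    pid f a = if (f a).isSome then some a else none := rfl

def pidE (f : Elem ι n) : Elem ι n :=
  ⟨pid f.1, by
    have h : {a : ι | ((pid f.1) a).isSome} = {a : ι | (f.1 a).isSome} := by
      ext a
      simp only [Set.mem_setOf_eq, pid_apply]
      split_ifs with h <;> simp [h]
    rw [h]; exact f.2⟩

lemma nle_iff {f g : Elem ι n} :
    nle f g ↔ ∀ a b : ι, f.1 a = some b → g.1 a = some b := by
  constructor
  · rintro ⟨e, he, rfl⟩ a b hab
    have hidem : ∀ a b : ι, e.1 a = some b → b = a := by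
      intro a b hb
      have h1 : (e * e).1 a = e.1 a := by rw [he]
      rw [mul_val, trans_apply', hb] at h1
      simp only [Option.bind_some] at h1
      have h2 : e.1.symm b = some a := (PEquiv.eq_some_iff e.1).2 hb
      have h3 : e.1.symm b = some b := (PEquiv.eq_some_iff e.1).2 h1
      exact (Option.some.inj (h2.symm.trans h3)).symm
    rw [mul_val, trans_apply'] at hab
    rcases Option.bind_eq_some_iff.1 hab with ⟨c, hc, hcb⟩
    have := hidem a c hc
    subst this
    exact hcb
  · intro h
    refine ⟨pidE f, ?_, ?_⟩
    · apply Subtype.ext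
      apply PEquiv.ext
      intro a
      show ((pid f.1 a).bind (pid f.1)) = pid f.1 a
      rw [pid_apply]
      split_ifs with h1 <;> simp [pid_apply, h1]
    · apply Subtype.ext
      apply PEquiv.ext
      intro a
      show f.1 a = (pid f.1 a).bind g.1
      rw [pid_apply]
      split_ifs with h1
      · simp only [Option.bind_some]
        rcases Option.isSome_iff_exists.1 h1 with ⟨b, hb⟩
        rw [hb, h a b hb]
      · simp only [Option.bind_none]
        exact Option.not_isSome_iff_eq_none.1 h1

/-- restriction of a partial bijection to a predicate on the domain -/
def restr (p : ι → Prop) [DecidablePred p] (x : ι ≃. ι) : ι ≃. ι where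
  toFun a := if p a then x a else none
  invFun b := (x.symm b).bind (fun a => if p a then some a else none)
  inv a b := by
    simp only [Option.mem_def, Option.bind_eq_some_iff]
    constructor
    · rintro ⟨c, hc, hc2⟩
      split_ifs at hc2 with hp
      · cases hc2
        rw [if_pos hp]
        exact (PEquiv.eq_some_iff x).1 hc
    · intro h
      split_ifs at h with hp
      · exact ⟨a, (PEquiv.eq_some_iff x).2 h, if_pos hp⟩

lemma restr_apply (p : ι → Prop) [DecidablePred p] (x : ι ≃. ι) (a : ι) :
    restr p x a = if p a then x a else none := rfl

def restrE (p : ι → Prop) [DecidablePred p] (x : Elem ι n) : Elem ι n :=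
  ⟨restr p x.1, by
    refine le_trans (Set.encard_mono ?_) x.2
    intro a ha
    simp only [Set.mem_setOf_eq, restr_apply] at *
    split_ifs at ha with hp
    · exact ha
    · simp at ha⟩

lemma restrE_apply (p : ι → Prop) [DecidablePred p] (x : Elem ι n) (a : ι) :
    (restrE p x).1 a = if p a then x.1 a else none := rfl

lemma nle_restrE (p : ι → Prop) [DecidablePred p] (x : Elem ι n) :
    nle (restrE p x) x := by
  rw [nle_iff]
  intro a b h
  rw [restrE_apply] at h
  split_ifs at h
  exact h

lemma inv_val (f : Elem ι n) : (inv f).1 = f.1.symm := rfl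

lemma inv_inv (f : Elem ι n) : inv (inv f) = f := Subtype.ext (PEquiv.symm_symm f.1)

lemma inv_mul (f g : Elem ι n) : inv (f * g) = inv g * inv f :=
  Subtype.ext (PEquiv.symm_trans_rev f.1 g.1)

lemma nle_inv {f g : Elem ι n} (h : nle f g) : nle (inv f) (inv g) := by
  rw [nle_iff] at h ⊢
  intro b a hab
  rw [inv_val] at hab ⊢
  exact (PEquiv.eq_some_iff g.1).2 (h a b ((PEquiv.eq_some_iff f.1).1 hab))

lemma nle_inv_iff {f g : Elem ι n} : nle (inv f) (inv g) ↔ nle f g :=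
  ⟨fun h => by simpa [inv_inv] using nle_inv h, nle_inv⟩

end Aux

end ISemi

open ISemi in
/-- The base `B_c` of the topology `τ_c`. -/
def Bc (ι : Type*) (n : ℕ) : Set (Set (ISemi.Elem ι n)) :=
  {V | ∃ (f : ISemi.Elem ι n) (F : Finset (ISemi.Elem ι n)),
    ↑F ⊆ ISemi.upset f \ {f} ∧ V = ISemi.upset f \ ⋃ g ∈ F, ISemi.upset g}

/-- The topology `τ_c` generated by the base `B_c`. -/
def tauc (ι : Type*) (n : ℕ) : TopologicalSpace (ISemi.Elem ι n) :=
  TopologicalSpace.generateFrom (Bc ι n)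

section Aux2

open ISemi

variable {ι : Type*} {n : ℕ}

lemma isOpen_bc {V : Set (Elem ι n)} (h : V ∈ Bc ι n) : (tauc ι n).IsOpen V :=
  TopologicalSpace.GenerateOpen.basic V h

lemma open_of_basic {S : Set (Elem ι n)}
    (h : ∀ x ∈ S, ∃ V ∈ Bc ι n, x ∈ V ∧ V ⊆ S) : (tauc ι n).IsOpen S := by
  have hS : S = ⋃₀ {V | V ∈ Bc ι n ∧ V ⊆ S} := by
    apply Set.Subset.antisymm
    · intro x hx
      rcases h x hx with ⟨V, hV, hxV, hVS⟩
      exact ⟨V, ⟨hV, hVS⟩, hxV⟩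
    · rintro x ⟨V, ⟨-, hVS⟩, hxV⟩
      exact hVS hxV
  rw [hS]
  exact TopologicalSpace.GenerateOpen.sUnion _ (fun V hV =>
    TopologicalSpace.GenerateOpen.basic V hV.1)


lemma leftCont (a : Elem ι n) :
    @Continuous _ _ (tauc ι n) (tauc ι n) (fun x : Elem ι n => a * x) := by
  classical
  show @Continuous _ _ (tauc ι n) (TopologicalSpace.generateFrom (Bc ι n)) _
  rw [continuous_generateFrom_iff]
  intro V hV
  obtain ⟨f, F, hF, rfl⟩ := hV
  apply open_of_basic
  intro x hx
  simp only [Set.mem_preimage, Set.mem_diff, upset, Set.mem_setOf_eq, Set.mem_iUnion,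
    exists_prop, not_exists, not_and] at hx
  obtain ⟨hfx, hgx⟩ := hx
  rw [nle_iff] at hfx
  set p : ι → Prop := fun b => ∃ t, a.1 t = some b ∧ (f.1 t).isSome with hp
  set x₀ : Elem ι n := restrE p x with hx₀
  have hx₀x : nle x₀ x := nle_restrE p x
  have hx₀graph : ∀ t c, f.1 t = some c → ∃ b, a.1 t = some b ∧ x₀.1 b = some c := by
    intro t c htc
    have h1 := hfx t c htc
    rw [mul_val] at h1
    rcases (PEquiv.trans_eq_some _ _ _ _).1 h1 with ⟨b, hab, hxb⟩
    refine ⟨b, hab, ?_⟩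
    rw [hx₀, restrE_apply, if_pos (show p b from ⟨t, hab, by simp [htc]⟩)]
    exact hxb
  have K2 : ∀ y : Elem ι n, nle x₀ y → nle f (a * y) := by
    intro y hy
    rw [nle_iff] at hy ⊢
    intro t c htc
    rcases hx₀graph t c htc with ⟨b, hab, hb⟩
    rw [mul_val]
    exact (PEquiv.trans_eq_some _ _ _ _).2 ⟨b, hab, hy b c hb⟩
  set q : Elem ι n → ι → Prop :=
    fun g b => p b ∨ ∃ t, a.1 t = some b ∧ (g.1 t).isSome with hq
  set Ext : Elem ι n → Prop := fun g => ∃ y : Elem ι n, nle x₀ y ∧ nle g (a * y) with hExt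
  set zf : Elem ι n → Elem ι n := fun g =>
    if h : Ext g then restrE (q g) (Classical.choose h) else x₀ with hzf
  have Hz : ∀ g : Elem ι n, Ext g →
      (∀ t c, g.1 t = some c → ∃ b, a.1 t = some b ∧ (zf g).1 b = some c) ∧
      nle x₀ (zf g) ∧
      (∀ y, nle x₀ y → nle g (a * y) → nle (zf g) y) := by
    intro g hg
    obtain ⟨hy₀1, hy₀2⟩ := Classical.choose_spec hg
    set y₀ := Classical.choose hg with hy₀def
    have hzg : zf g = restrE (q g) y₀ := by rw [hzf]; exact dif_pos hg
    rw [nle_iff] at hy₀1 hy₀2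
    have Z1 : ∀ t c, g.1 t = some c → ∃ b, a.1 t = some b ∧ (zf g).1 b = some c := by
      intro t c htc
      have h1 := hy₀2 t c htc
      rw [mul_val] at h1
      rcases (PEquiv.trans_eq_some _ _ _ _).1 h1 with ⟨b, hab, hyb⟩
      refine ⟨b, hab, ?_⟩
      rw [hzg, restrE_apply, if_pos (show q g b from Or.inr ⟨t, hab, by simp [htc]⟩)]
      exact hyb
    refine ⟨Z1, ?_, ?_⟩
    · rw [nle_iff]
      intro b c hbc
      rw [hx₀, restrE_apply] at hbc
      split_ifs at hbc with hpb
      rw [hzg, restrE_apply, if_pos (show q g b from Or.inl hpb)]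
      apply hy₀1
      rw [hx₀, restrE_apply, if_pos hpb]
      exact hbc
    · intro y hy hgy
      rw [nle_iff] at hy hgy ⊢
      intro b c hbc
      rw [hzg, restrE_apply] at hbc
      split_ifs at hbc with hqb
      rcases hqb with hpb | ⟨t, hab, hgt⟩
      · -- p b
        rcases hpb with ⟨t, hab, hft⟩
        rcases Option.isSome_iff_exists.1 hft with ⟨c', hftc⟩
        rcases hx₀graph t c' hftc with ⟨b', hab', hx₀b⟩
        have hbb' : b' = b := by rw [hab] at hab'; exact (Option.some.inj hab').symm
        subst hbb'
        have h1 : y₀.1 b' = some c' := hy₀1 b' c' hx₀b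
        have hcc' : c = c' := by rw [hbc] at h1; exact Option.some.inj h1
        subst hcc'
        exact hy b' c hx₀b
      · -- g part
        rcases Option.isSome_iff_exists.1 hgt with ⟨c', hgtc⟩
        have h1 := hy₀2 t c' hgtc
        rw [mul_val] at h1
        rcases (PEquiv.trans_eq_some _ _ _ _).1 h1 with ⟨b', hab', hyb'⟩
        have hbb' : b' = b := by rw [hab] at hab'; exact (Option.some.inj hab').symm
        subst hbb'
        have hcc' : c = c' := by rw [hbc] at hyb'; exact Option.some.inj hyb'
        subst hcc'
        have h2 := hgy t c hgtc
        rw [mul_val] at h2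
        rcases (PEquiv.trans_eq_some _ _ _ _).1 h2 with ⟨b'', hab'', hyb''⟩
        have hbb'' : b'' = b' := by rw [hab] at hab''; exact (Option.some.inj hab'').symm
        subst hbb''
        exact hyb''
  have hD1 : ∀ g ∈ F, Ext g → ¬ nle (zf g) x := by
    intro g hgF hg hzx
    apply hgx g hgF
    rw [nle_iff] at hzx ⊢
    intro t c htc
    rcases (Hz g hg).1 t c htc with ⟨b, hab, hzb⟩
    rw [mul_val]
    exact (PEquiv.trans_eq_some _ _ _ _).2 ⟨b, hab, hzx b c hzb⟩
  have hD2 : ∀ g ∈ F, Ext g → zf g ≠ x₀ := by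
    intro g hgF hg heq
    exact hD1 g hgF hg (heq ▸ hx₀x)
  set F' : Finset (Elem ι n) := (F.filter Ext).image zf with hF'
  refine ⟨upset x₀ \ ⋃ h ∈ F', upset h, ⟨x₀, F', ?_, rfl⟩, ⟨hx₀x, ?_⟩, ?_⟩
  · intro h hh
    simp only [hF', Finset.coe_image, Set.mem_image, Finset.mem_coe,
      Finset.mem_filter] at hh
    obtain ⟨g, ⟨hgF, hgE⟩, rfl⟩ := hh
    exact ⟨(Hz g hgE).2.1, by simpa using hD2 g hgF hgE⟩
  · simp only [Set.mem_iUnion, exists_prop, not_exists, not_and]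
    intro h hh
    simp only [hF', Finset.mem_image, Finset.mem_filter] at hh
    obtain ⟨g, ⟨hgF, hgE⟩, rfl⟩ := hh
    exact hD1 g hgF hgE
  · intro y hy
    obtain ⟨hy1, hy2⟩ := hy
    simp only [upset, Set.mem_setOf_eq] at hy1
    simp only [Set.mem_preimage, Set.mem_diff, upset, Set.mem_setOf_eq, Set.mem_iUnion,
      exists_prop, not_exists, not_and]
    refine ⟨K2 y hy1, ?_⟩
    intro g hgF hgy
    have hgE : Ext g := ⟨y, hy1, hgy⟩
    apply hy2
    simp only [Set.mem_iUnion, exists_prop]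
    refine ⟨zf g, ?_, (Hz g hgE).2.2 y hy1 hgy⟩
    simp only [hF', Finset.mem_image, Finset.mem_filter]
    exact ⟨g, ⟨hgF, hgE⟩, rfl⟩

lemma invCont :
    @Continuous _ _ (tauc ι n) (tauc ι n) (ISemi.inv : Elem ι n → Elem ι n) := by
  classical
  show @Continuous _ _ (tauc ι n) (TopologicalSpace.generateFrom (Bc ι n)) _
  rw [continuous_generateFrom_iff]
  intro V hV
  obtain ⟨f, F, hF, rfl⟩ := hV
  have hset : ISemi.inv ⁻¹' (upset f \ ⋃ g ∈ F, upset g)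
      = upset (ISemi.inv f) \ ⋃ g ∈ F.image ISemi.inv, upset g := by
    ext x
    simp only [Set.mem_preimage, Set.mem_diff, upset, Set.mem_setOf_eq, Set.mem_iUnion,
      exists_prop, not_exists, not_and, Finset.mem_image]
    constructor
    · rintro ⟨h1, h2⟩
      refine ⟨by simpa [inv_inv] using nle_inv h1, ?_⟩
      rintro h ⟨g, hg, rfl⟩ hcon
      exact h2 g hg (by simpa [inv_inv] using nle_inv hcon)
    · rintro ⟨h1, h2⟩
      refine ⟨by simpa [inv_inv] using nle_inv h1, ?_⟩
      intro g hg hcon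
      exact h2 (ISemi.inv g) ⟨g, hg, rfl⟩ (by simpa [inv_inv] using nle_inv hcon)
  rw [hset]
  apply isOpen_bc
  refine ⟨ISemi.inv f, F.image ISemi.inv, ?_, rfl⟩
  intro h hh
  simp only [Finset.coe_image, Set.mem_image, Finset.mem_coe] at hh
  obtain ⟨g, hg, rfl⟩ := hh
  obtain ⟨hg1, hg2⟩ := hF hg
  refine ⟨nle_inv hg1, ?_⟩
  simp only [Set.mem_singleton_iff] at hg2 ⊢
  intro heq
  exact hg2 (by rw [← inv_inv g, heq, inv_inv])

lemma rightCont (a : Elem ι n) :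
    @Continuous _ _ (tauc ι n) (tauc ι n) (fun x : Elem ι n => x * a) := by
  have heq : (fun x : Elem ι n => x * a)
      = ISemi.inv ∘ (fun y : Elem ι n => ISemi.inv a * y) ∘ ISemi.inv := by
    funext x
    simp only [Function.comp_apply]
    rw [inv_mul, inv_inv, inv_inv]
  rw [heq]
  exact @Continuous.comp _ _ _ (tauc ι n) (tauc ι n) (tauc ι n) _ _ invCont
    (@Continuous.comp _ _ _ (tauc ι n) (tauc ι n) (tauc ι n) _ _
      (leftCont (ISemi.inv a)) invCont)

end Aux2


theorem stmt13 (ι : Type*) [Infinite ι] (n : ℕ) (hn : 0 < n) :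
    (∀ a : ISemi.Elem ι n,
      @Continuous _ _ (tauc ι n) (tauc ι n) (fun x : ISemi.Elem ι n => a * x) ∧
      @Continuous _ _ (tauc ι n) (tauc ι n) (fun x : ISemi.Elem ι n => x * a)) ∧
    @Continuous _ _ (tauc ι n) (tauc ι n) (ISemi.inv : ISemi.Elem ι n → ISemi.Elem ι n) := by
  exact ⟨fun a => ⟨leftCont a, rightCont a⟩, invCont⟩
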